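/- Let m, n, q be positive odd integers. Then the series Σ_{k=1}^{∞} F_{2nk+mnq} / ( Π_{j=0}^{m} F_{2nk+2jnq} ) converges, and its sum equals (1 / L_{mnq}) · Σ_{k=1}^{q} 1 / ( Π_{j=0}^{m−1} F_{2nk+2jnq} ). -/

import Mathlib

open Filter Topology

/-- The Lucas numbers: `L 0 = 2`, `L 1 = 1`, `L (n+2) = L (n+1) + L n`. -/
def lucas : ℕ → ℕ
  | 0 => 2
  | 1 => 1
  | n + 2 => lucas (n + 1) + lucas n

lemma lucas_pair : ∀ a : ℕ, (lucas a + Nat.fib a = 2 * Nat.fib (a + 1) ∧ 0 < lucas a) ∧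
    (lucas (a + 1) + Nat.fib (a + 1) = 2 * Nat.fib (a + 2) ∧ 0 < lucas (a + 1)) := by
  intro a
  induction a with
  | zero => refine ⟨⟨?_, ?_⟩, ⟨?_, ?_⟩⟩ <;> simp [lucas]
  | succ k ih =>
    obtain ⟨⟨h1, p1⟩, ⟨h2, p2⟩⟩ := ih
    refine ⟨⟨h2, p2⟩, ?_, ?_⟩
    · show lucas (k + 2) + Nat.fib (k + 2) = 2 * Nat.fib (k + 3)
      have hl : lucas (k + 2) = lucas (k + 1) + lucas k := rfl
      have hf : Nat.fib (k + 3) = Nat.fib (k + 1) + Nat.fib (k + 2) := Nat.fib_add_two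
      have hf2 : Nat.fib (k + 2) = Nat.fib k + Nat.fib (k + 1) := Nat.fib_add_two
      omega
    · show 0 < lucas (k + 2)
      have hl : lucas (k + 2) = lucas (k + 1) + lucas k := rfl
      omega

lemma lucas_add_fib (a : ℕ) : lucas a + Nat.fib a = 2 * Nat.fib (a + 1) := (lucas_pair a).1.1

lemma lucas_pos (a : ℕ) : 0 < lucas a := (lucas_pair a).1.2

lemma cassini : ∀ k : ℕ, ((Nat.fib (k + 1) : ℤ))^2 =
    Nat.fib k ^ 2 + Nat.fib k * Nat.fib (k + 1) + (-1)^k := by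
  intro k
  induction k with
  | zero => simp
  | succ j ih =>
    have hf : (Nat.fib (j + 2) : ℤ) = Nat.fib j + Nat.fib (j + 1) := by
      exact_mod_cast Nat.fib_add_two
    rw [show j + 1 + 1 = j + 2 from rfl, hf, pow_succ]
    linear_combination -ih

lemma fib_key (a : ℕ) : ∀ x : ℕ, (Nat.fib (x + 1 + 2 * a) : ℤ) =
    lucas a * Nat.fib (x + 1 + a) - (-1)^a * Nat.fib (x + 1) := by
  have hL : (lucas a : ℤ) = 2 * Nat.fib (a + 1) - Nat.fib a := by
    have h := lucas_add_fib a; omega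
  have hC := cassini a
  have pair : ∀ x : ℕ,
      ((Nat.fib (x + 1 + 2 * a) : ℤ) = lucas a * Nat.fib (x + 1 + a) - (-1)^a * Nat.fib (x + 1)) ∧
      ((Nat.fib (x + 2 + 2 * a) : ℤ) = lucas a * Nat.fib (x + 2 + a) - (-1)^a * Nat.fib (x + 2)) := by
    intro x
    induction x with
    | zero =>
      constructor
      · have h1 : (Nat.fib (a + a + 1) : ℤ) =
            Nat.fib a * Nat.fib a + Nat.fib (a + 1) * Nat.fib (a + 1) := by
          exact_mod_cast Nat.fib_add a a
        have e1 : 0 + 1 + 2 * a = a + a + 1 := by omega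
        have e2 : 0 + 1 + a = a + 1 := by omega
        rw [e1, e2, h1]
        norm_num
        linear_combination (-1 : ℤ) * hC - (Nat.fib (a + 1) : ℤ) * hL
      · have h2 : (Nat.fib (a + (a + 1) + 1) : ℤ) =
            Nat.fib a * Nat.fib (a + 1) + Nat.fib (a + 1) * Nat.fib (a + 2) := by
          exact_mod_cast Nat.fib_add a (a + 1)
        have hf2 : (Nat.fib (a + 2) : ℤ) = Nat.fib a + Nat.fib (a + 1) := by
          exact_mod_cast Nat.fib_add_two
        have e1 : 0 + 2 + 2 * a = a + (a + 1) + 1 := by omega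
        have e2 : 0 + 2 + a = a + 2 := by omega
        rw [e1, e2, h2, hf2]
        norm_num
        linear_combination (-1 : ℤ) * hC - ((Nat.fib a : ℤ) + Nat.fib (a + 1)) * hL
    | succ k ih =>
      obtain ⟨ih1, ih2⟩ := ih
      refine ⟨ih2, ?_⟩
      have e1 : k + 1 + 2 + 2 * a = (k + 1 + 2 * a) + 2 := by omega
      have e2 : k + 1 + 2 + a = (k + 1 + a) + 2 := by omega
      have f1 : (Nat.fib ((k + 1 + 2 * a) + 2) : ℤ) =
          Nat.fib (k + 1 + 2 * a) + Nat.fib ((k + 1 + 2 * a) + 1) := by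
        exact_mod_cast Nat.fib_add_two
      have f2 : (Nat.fib ((k + 1 + a) + 2) : ℤ) =
          Nat.fib (k + 1 + a) + Nat.fib ((k + 1 + a) + 1) := by
        exact_mod_cast Nat.fib_add_two
      have f3 : (Nat.fib ((k + 1) + 2) : ℤ) =
          Nat.fib (k + 1) + Nat.fib ((k + 1) + 1) := by
        exact_mod_cast Nat.fib_add_two
      have e3 : k + 2 + 2 * a = (k + 1 + 2 * a) + 1 := by omega
      have e4 : k + 2 + a = (k + 1 + a) + 1 := by omega
      have e5 : k + 2 = (k + 1) + 1 := by omega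
      rw [e3, e4, e5] at ih2
      rw [e1, e2, f1, f2, f3]
      linear_combination ih1 + ih2
  exact fun x => (pair x).1

lemma fib_key_real {a : ℕ} (ha : Odd a) {x : ℕ} (hx : 1 ≤ x) :
    (Nat.fib (x + 2 * a) : ℝ) = lucas a * Nat.fib (x + a) + Nat.fib x := by
  obtain ⟨y, rfl⟩ := Nat.exists_eq_add_of_le hx
  have h := fib_key a y
  have hs : (-1 : ℤ)^a = -1 := ha.neg_one_pow
  have h' : (Nat.fib (y + 1 + 2 * a) : ℤ) =
      lucas a * Nat.fib (y + 1 + a) + Nat.fib (y + 1) := by rw [h, hs]; ring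
  have e : 1 + y = y + 1 := by omega
  rw [e]
  exact_mod_cast h'

noncomputable def gfun (m n q k : ℕ) : ℝ :=
    (∏ j ∈ Finset.range m, (Nat.fib (2 * n * k + 2 * j * n * q) : ℝ))⁻¹

lemma term_eq (m n q : ℕ) (hn' : 0 < n) (hodd : Odd (m * n * q)) (k : ℕ) (hk : 1 ≤ k) :
    (Nat.fib (2 * n * k + m * n * q) : ℝ) /
      ∏ j ∈ Finset.range (m + 1), (Nat.fib (2 * n * k + 2 * j * n * q) : ℝ)
    = (1 / (lucas (m * n * q) : ℝ)) * (gfun m n q k - gfun m n q (k + q)) := by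
  have hfibpos : ∀ i : ℕ, 0 < i → (0:ℝ) < (Nat.fib i : ℝ) := fun i hi => by
    exact_mod_cast Nat.fib_pos.mpr hi
  have hxpos : 0 < 2 * n * k := by positivity
  have hApos : (0:ℝ) < ∏ j ∈ Finset.range m, (Nat.fib (2 * n * k + 2 * j * n * q) : ℝ) :=
    Finset.prod_pos fun j _ => hfibpos _ (by omega)
  have hBpos : (0:ℝ) < ∏ j ∈ Finset.range m, (Nat.fib (2 * n * (k + q) + 2 * j * n * q) : ℝ) :=
    Finset.prod_pos fun j _ => hfibpos _ (by positivity)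
  have hFtop : (0:ℝ) < (Nat.fib (2 * n * k + 2 * m * n * q) : ℝ) := hfibpos _ (by omega)
  have hFbot : (0:ℝ) < (Nat.fib (2 * n * k) : ℝ) := hfibpos _ hxpos
  have hLpos : (0:ℝ) < (lucas (m * n * q) : ℝ) := by exact_mod_cast lucas_pos _
  have hsplit1 : (∏ j ∈ Finset.range (m + 1), (Nat.fib (2 * n * k + 2 * j * n * q) : ℝ)) =
      (∏ j ∈ Finset.range m, (Nat.fib (2 * n * k + 2 * j * n * q) : ℝ)) *
        (Nat.fib (2 * n * k + 2 * m * n * q) : ℝ) := Finset.prod_range_succ _ _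
  have hsplit2 : (∏ j ∈ Finset.range (m + 1), (Nat.fib (2 * n * k + 2 * j * n * q) : ℝ)) =
      (Nat.fib (2 * n * k) : ℝ) *
        ∏ j ∈ Finset.range m, (Nat.fib (2 * n * (k + q) + 2 * j * n * q) : ℝ) := by
    rw [Finset.prod_range_succ', mul_comm]
    congr 1
    · congr 2; ring
    · exact Finset.prod_congr rfl fun j _ => by
        congr 2; ring
  have hkey : (Nat.fib (2 * n * k + 2 * m * n * q) : ℝ) =
      lucas (m * n * q) * Nat.fib (2 * n * k + m * n * q) + Nat.fib (2 * n * k) := by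
    have h := fib_key_real hodd (x := 2 * n * k) (by omega)
    rwa [show 2 * n * k + 2 * (m * n * q) = 2 * n * k + 2 * m * n * q by ring] at h
  have hPP : (∏ j ∈ Finset.range m, (Nat.fib (2 * n * k + 2 * j * n * q) : ℝ)) *
        (Nat.fib (2 * n * k + 2 * m * n * q) : ℝ) =
      (Nat.fib (2 * n * k) : ℝ) *
        ∏ j ∈ Finset.range m, (Nat.fib (2 * n * (k + q) + 2 * j * n * q) : ℝ) :=
    hsplit1.symm.trans hsplit2
  rw [hsplit1]
  unfold gfun
  field_simp
  linear_combination (-(∏ j ∈ Finset.range m, (Nat.fib (2 * n * (k + q) + 2 * j * n * q) : ℝ))) * hkey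
    + hPP

lemma gfun_tendsto (m n q : ℕ) (hm' : 0 < m) (hn' : 0 < n) :
    Tendsto (gfun m n q) atTop (𝓝 0) := by
  have hP : Tendsto (fun k => ∏ j ∈ Finset.range m, Nat.fib (2 * n * k + 2 * j * n * q))
      atTop atTop := by
    apply tendsto_atTop_mono' atTop (_ : ∀ᶠ k in atTop, k ≤ _) tendsto_id
    filter_upwards [eventually_ge_atTop 3] with k hk
    calc (id k : ℕ) = k := rfl
      _ ≤ 2 * n * k := by nlinarith
      _ ≤ Nat.fib (2 * n * k) := Nat.le_fib_self (by nlinarith)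
      _ = Nat.fib (2 * n * k + 2 * 0 * n * q) := by norm_num
      _ ≤ ∏ j ∈ Finset.range m, Nat.fib (2 * n * k + 2 * j * n * q) := by
          exact Finset.single_le_prod' (f := fun j => Nat.fib (2 * n * k + 2 * j * n * q))
            (fun j _ => Nat.fib_pos.mpr (by positivity)) (Finset.mem_range.mpr hm')
  have hPR : Tendsto (fun k => ((∏ j ∈ Finset.range m, Nat.fib (2 * n * k + 2 * j * n * q) : ℕ) : ℝ))
      atTop atTop := tendsto_natCast_atTop_atTop.comp hP
  have := hPR.inv_tendsto_atTop
  apply this.congr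
  intro k
  simp [gfun]

lemma telescope (m n q : ℕ) (N : ℕ) (hN : q ≤ N) :
    ∑ k ∈ Finset.Icc 1 N, (gfun m n q k - gfun m n q (k + q)) =
      (∑ k ∈ Finset.Icc 1 q, gfun m n q k) -
        ∑ k ∈ Finset.Icc (N + 1) (N + q), gfun m n q k := by
  rw [Finset.sum_sub_distrib]
  have h1 : ∑ k ∈ Finset.Icc 1 N, gfun m n q (k + q)
      = ∑ k ∈ Finset.Icc (1 + q) (N + q), gfun m n q k := by
    rw [← Finset.map_add_right_Icc, Finset.sum_map]
    rfl
  rw [h1]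
  have e1 : Finset.Icc 1 N = Finset.Ioc 0 N := Finset.Icc_add_one_left_eq_Ioc _ _
  have e2 : Finset.Icc (1 + q) (N + q) = Finset.Ioc q (N + q) := by
    rw [show 1 + q = q + 1 by omega]; exact Finset.Icc_add_one_left_eq_Ioc _ _
  have e3 : Finset.Icc (N + 1) (N + q) = Finset.Ioc N (N + q) := Finset.Icc_add_one_left_eq_Ioc _ _
  have e4 : Finset.Icc 1 q = Finset.Ioc 0 q := Finset.Icc_add_one_left_eq_Ioc _ _
  rw [e1, e2, e3, e4]
  have t1 := Finset.sum_Ioc_consecutive (gfun m n q) (Nat.zero_le q) hN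
  have t2 := Finset.sum_Ioc_consecutive (gfun m n q) hN (Nat.le_add_right N q)
  linarith [t1, t2]

lemma tail_tendsto (m n q : ℕ) (hm' : 0 < m) (hn' : 0 < n) :
    Tendsto (fun N => ∑ k ∈ Finset.Icc (N + 1) (N + q), gfun m n q k) atTop (𝓝 0) := by
  have hrw : ∀ N : ℕ, ∑ k ∈ Finset.Icc (N + 1) (N + q), gfun m n q k
      = ∑ i ∈ Finset.range q, gfun m n q (N + 1 + i) := by
    intro N
    rw [← Finset.Ico_add_one_right_eq_Icc, Finset.sum_Ico_eq_sum_range,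
      show N + q + 1 - (N + 1) = q from by omega]
  have h0 : Tendsto (fun N => ∑ i ∈ Finset.range q, gfun m n q (N + 1 + i)) atTop (𝓝 0) := by
    have h := tendsto_finset_sum (Finset.range q)
      (fun i _ => (gfun_tendsto m n q hm' hn').comp (tendsto_add_atTop_nat (1 + i)))
    simpa [Function.comp, ← add_assoc] using h
  exact h0.congr (fun N => (hrw N).symm)

/-- Theorem (`m`, `n`, `q` odd):
`Σ_{k=1}^{∞} F_{2nk+mnq} / (Π_{j=0}^{m} F_{2nk+2jnq})
  = (1/L_{mnq}) Σ_{k=1}^{q} 1/(Π_{j=0}^{m−1} F_{2nk+2jnq})`. -/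
theorem stmt_16 (m n q : ℕ) (hm : Odd m) (hn : Odd n) (hq : Odd q)
    (hm' : 0 < m) (hn' : 0 < n) (hq' : 0 < q) :
    Tendsto (fun N => ∑ k ∈ Finset.Icc 1 N,
        (Nat.fib (2 * n * k + m * n * q) : ℝ) /
          ∏ j ∈ Finset.range (m + 1), (Nat.fib (2 * n * k + 2 * j * n * q) : ℝ))
      atTop
      (𝓝 ((1 / (lucas (m * n * q) : ℝ)) *
        ∑ k ∈ Finset.Icc 1 q,
          (1 : ℝ) / ∏ j ∈ Finset.range m, (Nat.fib (2 * n * k + 2 * j * n * q) : ℝ))) := by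
  have hodd : Odd (m * n * q) := (hm.mul hn).mul hq
  have hC : Tendsto (fun N => (1 / (lucas (m * n * q) : ℝ)) *
      ((∑ k ∈ Finset.Icc 1 q, gfun m n q k) -
        ∑ k ∈ Finset.Icc (N + 1) (N + q), gfun m n q k))
      atTop (𝓝 ((1 / (lucas (m * n * q) : ℝ)) *
        ((∑ k ∈ Finset.Icc 1 q, gfun m n q k) - 0))) :=
    (tendsto_const_nhds.sub (tail_tendsto m n q hm' hn')).const_mul _
  have heq : ∀ᶠ N in atTop, (1 / (lucas (m * n * q) : ℝ)) *
      ((∑ k ∈ Finset.Icc 1 q, gfun m n q k) -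
        ∑ k ∈ Finset.Icc (N + 1) (N + q), gfun m n q k)
      = ∑ k ∈ Finset.Icc 1 N,
        (Nat.fib (2 * n * k + m * n * q) : ℝ) /
          ∏ j ∈ Finset.range (m + 1), (Nat.fib (2 * n * k + 2 * j * n * q) : ℝ) := by
    filter_upwards [eventually_ge_atTop q] with N hN
    rw [Finset.sum_congr rfl
        (fun k hk => term_eq m n q hn' hodd k (Finset.mem_Icc.mp hk).1),
      ← Finset.mul_sum, telescope m n q N hN]
  have hfinal := hC.congr' heq
  have h2 : (1 / (lucas (m * n * q) : ℝ)) *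
      ((∑ k ∈ Finset.Icc 1 q, gfun m n q k) - 0)
      = (1 / (lucas (m * n * q) : ℝ)) * ∑ k ∈ Finset.Icc 1 q,
          (1 : ℝ) / ∏ j ∈ Finset.range m, (Nat.fib (2 * n * k + 2 * j * n * q) : ℝ) := by
    simp [gfun, one_div]
  rwa [h2] at hfinal
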